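/- For every fixed l ∈ ℕ, lim_{K→∞} [(1 − l/K) · H2(1/(K − l))] / H2(1/K) = 1, where the limit is over natural numbers K → ∞ (with K > l so that all quantities are defined). -/

import Mathlib

open Filter Real

lemma binEntropy_one_div' (x : ℝ) (hx : 1 < x) :
    binEntropy (1 / x) = (log x + (x - 1) * (log x - log (x - 1))) / x := by
  have hx0 : x ≠ 0 := by linarith
  have hx1 : x - 1 ≠ 0 := by linarith
  have h1 : (1 : ℝ) - 1 / x = (x - 1) / x := by field_simp
  rw [binEntropy, h1]; simp only [one_div, log_inv, Real.log_div hx1 hx0]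
  field_simp
  ring

lemma g_tendsto' : Tendsto (fun y : ℝ => (y - 1) * (log y - log (y - 1))) atTop (nhds 1) := by
  have h := Real.tendsto_mul_log_one_add_div_atTop 1
  have h2 : Tendsto (fun y : ℝ => (y - 1) * log (1 + 1 / (y - 1))) atTop (nhds 1) :=
    h.comp (tendsto_atTop_add_const_right atTop (-1) tendsto_id)
  refine h2.congr' ?_
  filter_upwards [eventually_gt_atTop (2 : ℝ)] with y hy
  have h1 : y - 1 ≠ 0 := by linarith
  have h0 : y ≠ 0 := by linarith
  have : (1 : ℝ) + 1 / (y - 1) = y / (y - 1) := by field_simp; ring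
  rw [this, Real.log_div h0 h1]

/-- **Sufficient condition for exact private search.** For every fixed `l`, the ratio
`(1 - l/K) · H₂(1/(K - l)) / H₂(1/K)` tends to `1` as the alphabet size `K → ∞`
(over natural numbers `K`, the expressions being meaningful once `K > l`). -/
theorem exact_search_entropy_ratio (l : ℕ) :
    Tendsto
      (fun K : ℕ =>
        (1 - (l : ℝ) / K) * Real.binEntropy (1 / ((K : ℝ) - l)) / Real.binEntropy (1 / K))
      atTop (nhds 1) := by
  set g : ℝ → ℝ := fun y => (y - 1) * (log y - log (y - 1)) with hg
  -- natural cast to atTop, shifted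
  have hcast : Tendsto (fun K : ℕ => (K : ℝ)) atTop atTop := tendsto_natCast_atTop_atTop
  have hshift : Tendsto (fun K : ℕ => (K : ℝ) - l) atTop atTop :=
    tendsto_atTop_add_const_right atTop (-(l : ℝ)) hcast |>.congr (fun K => by ring)
  have hgK : Tendsto (fun K : ℕ => g (K : ℝ)) atTop (nhds 1) := g_tendsto'.comp hcast
  have hgKl : Tendsto (fun K : ℕ => g ((K : ℝ) - l)) atTop (nhds 1) := g_tendsto'.comp hshift
  have hloginv : Tendsto (fun K : ℕ => 1 / log (K : ℝ)) atTop (nhds 0) :=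
    (Real.tendsto_log_atTop.comp hcast).inv_tendsto_atTop.congr (fun K => (one_div _).symm)
  -- log(K - l) - log K → 0
  have hlogdiff : Tendsto (fun K : ℕ => log ((K : ℝ) - l) - log (K : ℝ)) atTop (nhds 0) := by
    have hq : Tendsto (fun K : ℕ => ((K : ℝ) - l) / K) atTop (nhds 1) := by
      have h1 : Tendsto (fun K : ℕ => 1 - (l : ℝ) / K) atTop (nhds (1 - 0)) :=
        tendsto_const_nhds.sub (tendsto_const_nhds.div_atTop hcast)
      rw [sub_zero] at h1
      refine h1.congr' ?_
      filter_upwards [eventually_gt_atTop l] with K hK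
      have : (K : ℝ) ≠ 0 := ne_of_gt (by exact_mod_cast Nat.zero_lt_of_lt hK)
      field_simp
    have hcont : Tendsto (fun K : ℕ => log (((K : ℝ) - l) / K)) atTop (nhds 0) := by
      have := (Real.continuousAt_log (one_ne_zero)).tendsto.comp hq
      rw [Real.log_one] at this
      exact this
    refine hcont.congr' ?_
    filter_upwards [eventually_gt_atTop (l + 1)] with K hK
    have h0 : (K : ℝ) ≠ 0 := by
      have : (1:ℝ) ≤ K := by exact_mod_cast Nat.one_le_of_lt hK
      linarith
    have h1 : (K : ℝ) - l ≠ 0 := by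
      have : (l : ℝ) + 1 < K := by exact_mod_cast hK
      linarith
    rw [Real.log_div h1 h0]
  -- the nice form and its limit
  have hmain : Tendsto (fun K : ℕ =>
      ((1 : ℝ) + (log ((K : ℝ) - l) - log K) * (1 / log K) + g ((K : ℝ) - l) * (1 / log K)) /
      (1 + g (K : ℝ) * (1 / log K))) atTop (nhds 1) := by
    have hnum : Tendsto (fun K : ℕ =>
        (1 : ℝ) + (log ((K : ℝ) - l) - log K) * (1 / log K) + g ((K : ℝ) - l) * (1 / log K))
        atTop (nhds 1) := by
      have := ((tendsto_const_nhds : Tendsto (fun _ : ℕ => (1:ℝ)) atTop (nhds 1)).add (hlogdiff.mul hloginv)).add (hgKl.mul hloginv)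
      simpa using this
    have hden : Tendsto (fun K : ℕ => (1 : ℝ) + g (K : ℝ) * (1 / log K)) atTop (nhds 1) := by
      have := (tendsto_const_nhds : Tendsto (fun _ : ℕ => (1:ℝ)) atTop (nhds 1)).add (hgK.mul hloginv)
      simpa using this
    have := hnum.div hden one_ne_zero
    rw [div_one] at this
    exact this
  refine hmain.congr' ?_
  filter_upwards [eventually_gt_atTop (l + 1)] with K hK
  have hK2 : ((l : ℝ) + 1) < K := by exact_mod_cast hK
  have hx : (1 : ℝ) < (K : ℝ) - l := by linarith
  have hxK : (1 : ℝ) < (K : ℝ) := by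
    have : (0:ℝ) ≤ l := Nat.cast_nonneg l
    linarith
  have hK0 : (K : ℝ) ≠ 0 := by linarith
  have hKl0 : (K : ℝ) - l ≠ 0 := by linarith
  have hlogK : log (K : ℝ) ≠ 0 := ne_of_gt (Real.log_pos hxK)
  have hEpos : 0 < binEntropy (1 / (K : ℝ)) := by
    apply Real.binEntropy_pos (by positivity) (by rw [div_lt_one (by linarith)]; linarith)
  rw [binEntropy_one_div' _ hx, binEntropy_one_div' _ hxK]
  have hden : log (K : ℝ) + g (K : ℝ) ≠ 0 := by
    have : binEntropy (1 / (K : ℝ)) = (log K + g K) / K := binEntropy_one_div' _ hxK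
    rw [this] at hEpos
    intro h; rw [h] at hEpos; simp at hEpos
  have h1l : (1 : ℝ) - (l : ℝ) / K = ((K : ℝ) - l) / K := by field_simp
  rw [h1l, hg]
  field_simp
  ring
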